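/- Let l ≥ 1, p ≥ 1, and n_1, …, n_l ≥ 1. For every l-layer ℝ → ℝ^p ReLU neural network with n_i neurons in layer i (i.e., for every choice of weights and biases), the set of knots of the network output function is finite and its cardinality m_l satisfies m_l ≤ Σ_{i=1}^{l} n_i ∏_{j=i+1}^{l} (n_j + 1). -/

import Mathlib

/-- The rectified linear unit `σ(x) = max(0, x)`. -/
noncomputable def relu (x : ℝ) : ℝ := max 0 x

/-- Outputs of hidden layer `i` (0-indexed, so layer `i` of the paper is index `i - 1`)
of a fully-connected feedforward ReLU network with scalar input.
`n i` is the number of neurons in (0-indexed) layer `i`,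
`w1 b1` are the input weights and biases of the first hidden layer, and
`w i`, `b i` are the weights and biases mapping layer `i` to layer `i + 1`. -/
noncomputable def layerOut (n : ℕ → ℕ)
    (w1 b1 : Fin (n 0) → ℝ)
    (w : (i : ℕ) → Fin (n (i + 1)) → Fin (n i) → ℝ)
    (b : (i : ℕ) → Fin (n (i + 1)) → ℝ) :
    (i : ℕ) → ℝ → Fin (n i) → ℝ
  | 0 => fun x k => relu (w1 k * x + b1 k)
  | (i + 1) => fun x k =>
      relu ((∑ j, w i k j * layerOut n w1 b1 w b i x j) + b i k)

/-- The output `y : ℝ → ℝ^p` of an `l`-layer ReLU network (`l ≥ 1`), with output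
weights `wOut` and output biases `bOut` applied to the last hidden layer `l - 1`. -/
noncomputable def netOut (l p : ℕ) (n : ℕ → ℕ)
    (w1 b1 : Fin (n 0) → ℝ)
    (w : (i : ℕ) → Fin (n (i + 1)) → Fin (n i) → ℝ)
    (b : (i : ℕ) → Fin (n (i + 1)) → ℝ)
    (wOut : Fin p → Fin (n (l - 1)) → ℝ) (bOut : Fin p → ℝ)
    (x : ℝ) : Fin p → ℝ :=
  fun k => (∑ j, wOut k j * layerOut n w1 b1 w b (l - 1) x j) + bOut k

/-! ### Piecewise affine functions with a prescribed finite set of knot candidates -/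

/-- `x` and `y` lie in the same cell determined by the finite set `S`:
no point of `S` lies between them (inclusively). -/
def Cell (S : Finset ℝ) (x y : ℝ) : Prop := ∀ s ∈ S, s ∉ Set.uIcc x y

/-- `f` is continuous and piecewise affine with all knots among `S`. -/
def PWA (S : Finset ℝ) (f : ℝ → ℝ) : Prop :=
  Continuous f ∧ ∀ x ∉ S, ∃ a c : ℝ, ∀ y, Cell S x y → f y = a * y + c

lemma Cell.symm {S : Finset ℝ} {x y : ℝ} (h : Cell S x y) : Cell S y x := by
  intro s hs; rw [Set.uIcc_comm]; exact h s hs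

lemma cell_self {S : Finset ℝ} {x : ℝ} (hx : x ∉ S) : Cell S x x := by
  intro s hs hmem
  rw [Set.uIcc_self, Set.mem_singleton_iff] at hmem
  exact hx (hmem ▸ hs)

lemma Cell.sub {S : Finset ℝ} {x y z : ℝ} (h : Cell S x y) (hz : z ∈ Set.uIcc x y) :
    Cell S x z := by
  intro s hs hmem
  exact h s hs (Set.uIcc_subset_uIcc Set.left_mem_uIcc hz hmem)

lemma Cell.mono {S T : Finset ℝ} {x y : ℝ} (hST : S ⊆ T) (h : Cell T x y) : Cell S x y :=
  fun s hs => h s (hST hs)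

lemma PWA.mono {S T : Finset ℝ} {f : ℝ → ℝ} (hST : S ⊆ T) (h : PWA S f) : PWA T f := by
  refine ⟨h.1, fun x hx => ?_⟩
  obtain ⟨a, c, hac⟩ := h.2 x (fun hxS => hx (hST hxS))
  exact ⟨a, c, fun y hy => hac y (hy.mono hST)⟩

lemma pwa_affine {S : Finset ℝ} (a c : ℝ) : PWA S (fun x => a * x + c) :=
  ⟨by continuity, fun x _ => ⟨a, c, fun y _ => rfl⟩⟩

lemma pwa_const {S : Finset ℝ} (c : ℝ) : PWA S (fun _ => c) := by
  have := pwa_affine (S := S) 0 c; simpa using this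

lemma PWA.add {S : Finset ℝ} {f g : ℝ → ℝ} (hf : PWA S f) (hg : PWA S g) :
    PWA S (fun x => f x + g x) := by
  refine ⟨hf.1.add hg.1, fun x hx => ?_⟩
  obtain ⟨a, c, hac⟩ := hf.2 x hx
  obtain ⟨a', c', hac'⟩ := hg.2 x hx
  exact ⟨a + a', c + c', fun y hy => by
    simp only []; rw [hac y hy, hac' y hy]; ring⟩

lemma PWA.const_mul {S : Finset ℝ} {f : ℝ → ℝ} (hf : PWA S f) (r : ℝ) :
    PWA S (fun x => r * f x) := by
  refine ⟨continuous_const.mul hf.1, fun x hx => ?_⟩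
  obtain ⟨a, c, hac⟩ := hf.2 x hx
  exact ⟨r * a, r * c, fun y hy => by
    simp only []; rw [hac y hy]; ring⟩

lemma pwa_sum {S : Finset ℝ} {ι : Type*} (t : Finset ι) (g : ι → ℝ → ℝ)
    (h : ∀ j ∈ t, PWA S (g j)) : PWA S (fun x => ∑ j ∈ t, g j x) := by
  classical
  induction t using Finset.induction_on with
  | empty => simpa using pwa_const (S := S) 0
  | insert a t hnot ih =>
    simp only [Finset.sum_insert hnot]
    exact (h a (Finset.mem_insert_self a t)).add
      (ih fun j hj => h j (Finset.mem_insert_of_mem hj))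

lemma relu_of_nonpos {t : ℝ} (h : t ≤ 0) : relu t = 0 := max_eq_left h
lemma relu_of_nonneg {t : ℝ} (h : 0 ≤ t) : relu t = t := max_eq_right h

/-- ReLU of a PWA function adds at most `S.card + 1` new knots. -/
lemma pwa_relu {S : Finset ℝ} {f : ℝ → ℝ} (hf : PWA S f) :
    ∃ N : Finset ℝ, N.card ≤ S.card + 1 ∧ PWA (S ∪ N) (fun x => relu (f x)) := by
  classical
  set Z : Set ℝ := {x | x ∉ S ∧ f x = 0 ∧ ∃ y, Cell S x y ∧ f y ≠ 0} with hZ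
  have hsame : ∀ x ∈ Z, ∀ y ∈ Z, Cell S x y → x = y := by
    rintro x ⟨hxS, hfx, y', hy', hfy'⟩ y ⟨hyS, hfy, -⟩ hcell
    obtain ⟨a, c, hac⟩ := hf.2 x hxS
    have ha : a ≠ 0 := by
      intro ha0
      have h1 := hac x (cell_self hxS)
      have h2 := hac y' hy'
      rw [ha0] at h1 h2
      simp at h1 h2
      rw [h1] at hfx; rw [h2] at hfy'; exact hfy' hfx
    have h1 := hac x (cell_self hxS)
    have h2 := hac y hcell
    rw [hfx] at h1; rw [hfy] at h2
    have : a * x = a * y := by linarith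
    exact mul_left_cancel₀ ha this
  have hinj : Set.InjOn (fun x => (S.filter (· < x)).card) Z := by
    intro x hx y hy hxy
    rcases le_total x y with hle | hle
    · refine hsame x hx y hy ?_
      intro s hs hmem
      rw [Set.uIcc_of_le hle, Set.mem_Icc] at hmem
      have hsx : x < s := lt_of_le_of_ne hmem.1 (fun h => hx.1 (h ▸ hs))
      have hsy : s < y := lt_of_le_of_ne hmem.2 (fun h => hy.1 (h.symm ▸ hs))
      have hsub : S.filter (· < x) ⊆ S.filter (· < y) := by
        intro t ht
        simp only [Finset.mem_filter] at ht ⊢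
        exact ⟨ht.1, lt_of_lt_of_le ht.2 hle⟩
      have heq : S.filter (· < x) = S.filter (· < y) :=
        Finset.eq_of_subset_of_card_le hsub (le_of_eq hxy.symm)
      have : s ∈ S.filter (· < y) := Finset.mem_filter.2 ⟨hs, hsy⟩
      rw [← heq, Finset.mem_filter] at this
      exact absurd this.2 (not_lt.2 hsx.le)
    · refine (hsame y hy x hx ?_).symm
      intro s hs hmem
      rw [Set.uIcc_of_le hle, Set.mem_Icc] at hmem
      have hsx : y < s := lt_of_le_of_ne hmem.1 (fun h => hy.1 (h ▸ hs))
      have hsy : s < x := lt_of_le_of_ne hmem.2 (fun h => hx.1 (h.symm ▸ hs))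
      have hsub : S.filter (· < y) ⊆ S.filter (· < x) := by
        intro t ht
        simp only [Finset.mem_filter] at ht ⊢
        exact ⟨ht.1, lt_of_lt_of_le ht.2 hle⟩
      have heq : S.filter (· < y) = S.filter (· < x) :=
        Finset.eq_of_subset_of_card_le hsub (le_of_eq hxy)
      have : s ∈ S.filter (· < x) := Finset.mem_filter.2 ⟨hs, hsy⟩
      rw [← heq, Finset.mem_filter] at this
      exact absurd this.2 (not_lt.2 hsx.le)
  have himg : (fun x => (S.filter (· < x)).card) '' Z ⊆ ↑(Finset.range (S.card + 1)) := by
    rintro m ⟨x, -, rfl⟩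
    simp only [Finset.coe_range, Set.mem_Iio]
    exact Nat.lt_succ_of_le (Finset.card_filter_le _ _)
  have hZfin : Z.Finite :=
    Set.Finite.of_finite_image ((Finset.range (S.card + 1)).finite_toSet.subset himg) hinj
  have hZcard : Z.ncard ≤ S.card + 1 := by
    calc Z.ncard = ((fun x => (S.filter (· < x)).card) '' Z).ncard :=
          (Set.ncard_image_of_injOn hinj).symm
      _ ≤ (↑(Finset.range (S.card + 1)) : Set ℕ).ncard :=
          Set.ncard_le_ncard himg (Finset.range (S.card + 1)).finite_toSet
      _ = S.card + 1 := by rw [Set.ncard_coe_finset, Finset.card_range]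
  refine ⟨hZfin.toFinset, by rwa [Set.ncard_eq_toFinset_card Z hZfin] at hZcard, ?_⟩
  constructor
  · exact continuous_const.max hf.1
  · intro x hx
    rw [Finset.mem_union, Set.Finite.mem_toFinset] at hx
    push_neg at hx
    obtain ⟨hxS, hxZ⟩ := hx
    obtain ⟨a, c, hac⟩ := hf.2 x hxS
    by_cases h0 : f x = 0
    · have hzero : ∀ y, Cell S x y → f y = 0 := by
        intro y hy
        by_contra hne
        exact hxZ ⟨hxS, h0, y, hy, hne⟩
      exact ⟨0, 0, fun y hy => by
        simp only []
        rw [hzero y (hy.mono Finset.subset_union_left), relu_of_nonpos le_rfl]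
        ring⟩
    · rcases lt_or_gt_of_ne h0 with hneg | hpos
      · refine ⟨0, 0, fun y hy => ?_⟩
        simp only []
        have hy' : Cell S x y := hy.mono Finset.subset_union_left
        have hfy : f y < 0 := by
          by_contra hge
          push_neg at hge
          have h0mem : (0 : ℝ) ∈ Set.uIcc (f x) (f y) :=
            Set.mem_uIcc.2 (Or.inl ⟨hneg.le, hge⟩)
          obtain ⟨z, hz, hfz⟩ := intermediate_value_uIcc hf.1.continuousOn h0mem
          have hzScell : Cell S x z := hy'.sub hz
          have hzS : z ∉ S := fun hzS => hy z (Finset.mem_union_left _ hzS) hz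
          have hzZ : z ∈ Z := ⟨hzS, hfz, x, (hzScell).symm, h0⟩
          exact hy z (Finset.mem_union_right _ (hZfin.mem_toFinset.2 hzZ)) hz
        rw [relu_of_nonpos hfy.le]; ring
      · refine ⟨a, c, fun y hy => ?_⟩
        simp only []
        have hy' : Cell S x y := hy.mono Finset.subset_union_left
        have hfy : 0 < f y := by
          by_contra hge
          push_neg at hge
          have h0mem : (0 : ℝ) ∈ Set.uIcc (f x) (f y) :=
            Set.mem_uIcc.2 (Or.inr ⟨hge, hpos.le⟩)
          obtain ⟨z, hz, hfz⟩ := intermediate_value_uIcc hf.1.continuousOn h0mem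
          have hzScell : Cell S x z := hy'.sub hz
          have hzS : z ∉ S := fun hzS => hy z (Finset.mem_union_left _ hzS) hz
          have hzZ : z ∈ Z := ⟨hzS, hfz, x, (hzScell).symm, h0⟩
          exact hy z (Finset.mem_union_right _ (hZfin.mem_toFinset.2 hzZ)) hz
        rw [relu_of_nonneg hfy.le, hac y hy']

/-- A PWA function is differentiable off `S`. -/
lemma PWA.differentiableAt {S : Finset ℝ} {f : ℝ → ℝ} (hf : PWA S f) {x : ℝ}
    (hx : x ∉ S) : DifferentiableAt ℝ f x := by
  obtain ⟨a, c, hac⟩ := hf.2 x hx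
  have hopen : IsOpen ((↑S : Set ℝ)ᶜ) := (S.finite_toSet.isClosed).isOpen_compl
  obtain ⟨ε, hε, hball⟩ := Metric.isOpen_iff.1 hopen x hx
  have hev : f =ᶠ[nhds x] (fun y => a * y + c) := by
    filter_upwards [Metric.ball_mem_nhds x hε] with y hy
    refine hac y ?_
    intro s hs hmem
    rw [Metric.mem_ball, Real.dist_eq] at hy
    have hd : |s - x| < ε := by
      rw [abs_lt] at hy ⊢
      rcases Set.mem_uIcc.1 hmem with ⟨h1, h2⟩ | ⟨h1, h2⟩ <;>
        exact ⟨by linarith, by linarith⟩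
    exact hball (by rwa [Metric.mem_ball, Real.dist_eq]) hs
  exact ((differentiableAt_id.const_mul a).add_const c).congr_of_eventuallyEq hev

/-- All outputs of hidden layer `i` are PWA with a common knot set of bounded size. -/
lemma layer_pwa (n : ℕ → ℕ)
    (w1 b1 : Fin (n 0) → ℝ)
    (w : (i : ℕ) → Fin (n (i + 1)) → Fin (n i) → ℝ)
    (b : (i : ℕ) → Fin (n (i + 1)) → ℝ) (i : ℕ) :
    ∃ S : Finset ℝ,
      S.card ≤ ∑ t ∈ Finset.range (i + 1), n t * ∏ j ∈ Finset.Ico (t + 1) (i + 1), (n j + 1) ∧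
      ∀ k : Fin (n i), PWA S (fun x => layerOut n w1 b1 w b i x k) := by
  classical
  induction i with
  | zero =>
    have h : ∀ k : Fin (n 0), ∃ N : Finset ℝ, N.card ≤ 1 ∧
        PWA N (fun x => relu (w1 k * x + b1 k)) := by
      intro k
      obtain ⟨N, hN, hpwa⟩ := pwa_relu (S := ∅) (pwa_affine (w1 k) (b1 k))
      exact ⟨N, by simpa using hN, by simpa using hpwa⟩
    choose N hNcard hNpwa using h
    refine ⟨Finset.univ.biUnion N, ?_, ?_⟩
    · calc (Finset.univ.biUnion N).card ≤ ∑ k : Fin (n 0), (N k).card :=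
            Finset.card_biUnion_le
        _ ≤ ∑ _k : Fin (n 0), 1 := Finset.sum_le_sum fun k _ => hNcard k
        _ = n 0 := by simp
        _ = _ := by simp
    · intro k
      have : PWA (Finset.univ.biUnion N) (fun x => relu (w1 k * x + b1 k)) :=
        (hNpwa k).mono (Finset.subset_biUnion_of_mem N (Finset.mem_univ k))
      simpa [layerOut] using this
  | succ i ih =>
    obtain ⟨S, hScard, hSpwa⟩ := ih
    have hpre : ∀ k : Fin (n (i + 1)),
        PWA S (fun x => (∑ j, w i k j * layerOut n w1 b1 w b i x j) + b i k) := by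
      intro k
      exact (pwa_sum Finset.univ _ (fun j _ => (hSpwa j).const_mul (w i k j))).add
        (pwa_const (b i k))
    have h : ∀ k : Fin (n (i + 1)), ∃ N : Finset ℝ, N.card ≤ S.card + 1 ∧
        PWA (S ∪ N) (fun x =>
          relu ((∑ j, w i k j * layerOut n w1 b1 w b i x j) + b i k)) :=
      fun k => pwa_relu (hpre k)
    choose N hNcard hNpwa using h
    refine ⟨S ∪ Finset.univ.biUnion N, ?_, ?_⟩
    · have h1 : (S ∪ Finset.univ.biUnion N).card ≤ S.card + n (i + 1) * (S.card + 1) := by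
        calc (S ∪ Finset.univ.biUnion N).card ≤ S.card + (Finset.univ.biUnion N).card :=
              Finset.card_union_le _ _
          _ ≤ S.card + ∑ k : Fin (n (i + 1)), (N k).card :=
              Nat.add_le_add_left Finset.card_biUnion_le _
          _ ≤ S.card + ∑ _k : Fin (n (i + 1)), (S.card + 1) :=
              Nat.add_le_add_left (Finset.sum_le_sum fun k _ => hNcard k) _
          _ = S.card + n (i + 1) * (S.card + 1) := by
              rw [Finset.sum_const, Finset.card_univ, Fintype.card_fin, smul_eq_mul]
      refine h1.trans ?_
      have hrec : (∑ t ∈ Finset.range (i + 2), n t * ∏ j ∈ Finset.Ico (t + 1) (i + 2), (n j + 1)) =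
          (n (i + 1) + 1) * (∑ t ∈ Finset.range (i + 1), n t * ∏ j ∈ Finset.Ico (t + 1) (i + 1), (n j + 1)) + n (i + 1) := by
        rw [Finset.sum_range_succ]
        have hterm : n (i + 1) * ∏ j ∈ Finset.Ico (i + 2) (i + 2), (n j + 1) = n (i + 1) := by
          simp
        rw [hterm]
        congr 1
        rw [Finset.mul_sum]
        refine Finset.sum_congr rfl fun t ht => ?_
        rw [Finset.mem_range] at ht
        rw [Finset.prod_Ico_succ_top (by omega : t + 1 ≤ i + 1)]
        ring
      rw [hrec]
      nlinarith [hScard]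
    · intro k
      have : PWA (S ∪ N k) (fun x =>
          relu ((∑ j, w i k j * layerOut n w1 b1 w b i x j) + b i k)) := hNpwa k
      refine (this.mono ?_)
      exact Finset.union_subset_union_right (Finset.subset_biUnion_of_mem N (Finset.mem_univ k))

/-- **Theorem 1 (knot upper bound).** For every `l`-layer `ℝ → ℝ^p` ReLU neural network
with `n i ≥ 1` neurons in layer `i`, the set of knots (points of non-differentiability
of the output) is finite with cardinality at most
`∑_{i=1}^{l} n_i ∏_{j=i+1}^{l} (n_j + 1)` (here 0-indexed). -/
theorem knot_upper_bound (l p : ℕ) (hl : 1 ≤ l) (hp : 1 ≤ p)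
    (n : ℕ → ℕ) (hn : ∀ i, i < l → 1 ≤ n i)
    (w1 b1 : Fin (n 0) → ℝ)
    (w : (i : ℕ) → Fin (n (i + 1)) → Fin (n i) → ℝ)
    (b : (i : ℕ) → Fin (n (i + 1)) → ℝ)
    (wOut : Fin p → Fin (n (l - 1)) → ℝ) (bOut : Fin p → ℝ) :
    {x : ℝ | ¬ DifferentiableAt ℝ (netOut l p n w1 b1 w b wOut bOut) x}.Finite ∧
    {x : ℝ | ¬ DifferentiableAt ℝ (netOut l p n w1 b1 w b wOut bOut) x}.ncard ≤
      ∑ i ∈ Finset.range l, n i * ∏ j ∈ Finset.Ico (i + 1) l, (n j + 1) := by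
  classical
  obtain ⟨S, hScard, hSpwa⟩ := layer_pwa n w1 b1 w b (l - 1)
  have hl1 : l - 1 + 1 = l := Nat.succ_pred_eq_of_pos hl
  rw [hl1] at hScard
  -- each output component is PWA with knot set S
  have hout : ∀ k : Fin p, PWA S (fun x =>
      (∑ j, wOut k j * layerOut n w1 b1 w b (l - 1) x j) + bOut k) := by
    intro k
    exact (pwa_sum Finset.univ _ (fun j _ => (hSpwa j).const_mul (wOut k j))).add
      (pwa_const (bOut k))
  have hdiff : ∀ x : ℝ, x ∉ S →
      DifferentiableAt ℝ (netOut l p n w1 b1 w b wOut bOut) x := by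
    intro x hx
    rw [show (netOut l p n w1 b1 w b wOut bOut) = fun x (k : Fin p) =>
      (∑ j, wOut k j * layerOut n w1 b1 w b (l - 1) x j) + bOut k from rfl]
    exact differentiableAt_pi.2 fun k => (hout k).differentiableAt hx
  have hsub : {x : ℝ | ¬ DifferentiableAt ℝ (netOut l p n w1 b1 w b wOut bOut) x} ⊆ ↑S := by
    intro x hx
    by_contra hxS
    exact hx (hdiff x hxS)
  refine ⟨S.finite_toSet.subset hsub, ?_⟩
  calc {x : ℝ | ¬ DifferentiableAt ℝ (netOut l p n w1 b1 w b wOut bOut) x}.ncard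
      ≤ (↑S : Set ℝ).ncard := Set.ncard_le_ncard hsub S.finite_toSet
    _ = S.card := Set.ncard_coe_finset S
    _ ≤ _ := hScard
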